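/- Let A be a finite set with |A| = q ≥ 2 and let n ≥ 2. There is no transformation f : A^n → A^n such that Sing(A^n) ⊆ S_f, where S_f is the subsemigroup of Tran(A^n) generated by the n instructions induced by the coordinate functions of f. -/
import Mathlib


/-- The instruction of `A^m` induced by the `i`-th coordinate function of `f`:
it updates register `i` to `f x i` and leaves all other registers unchanged. -/
def instr {A : Type*} {m : ℕ} (f : (Fin m → A) → Fin m → A) (i : Fin m) :
    (Fin m → A) → Fin m → A :=
  fun x => Function.update x i (f x i)

/-- Apply a list of induced instructions of `f`, first element of the list first. -/
def applyInstrs {A : Type*} {m : ℕ} (f : (Fin m → A) → Fin m → A) :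
    List (Fin m) → (Fin m → A) → Fin m → A
  | [], x => x
  | i :: l, x => applyInstrs f l (instr f i x)

lemma applyInstrs_append {A : Type*} {m : ℕ} (f : (Fin m → A) → Fin m → A)
    (l : List (Fin m)) (c : Fin m) (x : Fin m → A) :
    applyInstrs f (l ++ [c]) x = instr f c (applyInstrs f l x) := by
  induction l generalizing x with
  | nil => rfl
  | cons i l IH => simpa [applyInstrs] using IH (instr f i x)

/-- Key structural lemma: if a nonempty word in the instructions of `f` equals a map whose
only non-injectivity is merging the pair `(a, b)`, then some instruction has a collision
`(u, v)` (differing in exactly one coordinate `i`, with `f u i = f v i`), where `u, v`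
agree with `a, b` (possibly swapped) on every coordinate whose instruction is non-injective. -/
lemma collision_lemma {A : Type*} [Fintype A] {n : ℕ} (f : (Fin n → A) → Fin n → A) :
    ∀ (l : List (Fin n)), l ≠ [] → ∀ (a b : Fin n → A), a ≠ b →
    applyInstrs f l a = applyInstrs f l b →
    (∀ x y, applyInstrs f l x = applyInstrs f l y →
      x = y ∨ (x = a ∧ y = b) ∨ (x = b ∧ y = a)) →
    ∃ (i : Fin n) (u v : Fin n → A), u i ≠ v i ∧ (∀ j, j ≠ i → u j = v j) ∧
      f u i = f v i ∧
      ∀ j, Function.Injective (instr f j) ∨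
        ((u j = a j ∧ v j = b j) ∨ (u j = b j ∧ v j = a j)) := by
  intro l
  induction l with
  | nil => intro h; exact absurd rfl h
  | cons i₁ l' IH =>
    intro _ a b hab hmerge hker
    by_cases hinj : Function.Injective (instr f i₁)
    · rcases eq_or_ne l' [] with rfl | hl'
      · exact absurd (hinj (show instr f i₁ a = instr f i₁ b from hmerge)) hab
      · have hab' : instr f i₁ a ≠ instr f i₁ b := fun h => hab (hinj h)
        have hsurj : Function.Surjective (instr f i₁) :=
          Finite.injective_iff_surjective.mp hinj
        obtain ⟨i, u, v, h1, h2, h3, h4⟩ := IH hl' _ _ hab'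
          (show applyInstrs f l' (instr f i₁ a) = applyInstrs f l' (instr f i₁ b)
            from hmerge)
          (by
            intro x y hxy
            obtain ⟨p, rfl⟩ := hsurj x
            obtain ⟨q, rfl⟩ := hsurj y
            rcases hker p q hxy with rfl | ⟨rfl, rfl⟩ | ⟨rfl, rfl⟩
            · exact Or.inl rfl
            · exact Or.inr (Or.inl ⟨rfl, rfl⟩)
            · exact Or.inr (Or.inr ⟨rfl, rfl⟩))
        refine ⟨i, u, v, h1, h2, h3, fun j => ?_⟩
        rcases eq_or_ne j i₁ with rfl | hji
        · exact Or.inl hinj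
        · rcases h4 j with h | h | h
          · exact Or.inl h
          · refine Or.inr (Or.inl ?_)
            simpa [instr, Function.update_of_ne hji] using h
          · refine Or.inr (Or.inr ?_)
            simpa [instr, Function.update_of_ne hji] using h
    · rw [Function.not_injective_iff] at hinj
      obtain ⟨u₀, v₀, h₀, hne₀⟩ := hinj
      have hg : applyInstrs f (i₁ :: l') u₀ = applyInstrs f (i₁ :: l') v₀ := by
        show applyInstrs f l' (instr f i₁ u₀) = applyInstrs f l' (instr f i₁ v₀)
        rw [h₀]
      have hcoll : instr f i₁ a = instr f i₁ b := by
        rcases hker u₀ v₀ hg with rfl | ⟨rfl, rfl⟩ | ⟨rfl, rfl⟩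
        · exact absurd rfl hne₀
        · exact h₀
        · exact h₀.symm
      have hoff : ∀ j, j ≠ i₁ → a j = b j := by
        intro j hj
        have := congrFun hcoll j
        simpa [instr, Function.update_of_ne hj] using this
      have hfi : f a i₁ = f b i₁ := by
        have := congrFun hcoll i₁
        simpa [instr] using this
      have hai : a i₁ ≠ b i₁ := by
        intro h
        apply hab
        funext j
        rcases eq_or_ne j i₁ with rfl | hj
        · exact h
        · exact hoff j hj
      exact ⟨i₁, a, b, hai, hoff, hfi, fun j => Or.inr (Or.inl ⟨rfl, rfl⟩)⟩

/-- There is no transformation `f` of `A^n` such that every singular (non-bijective)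
transformation of `A^n` lies in the semigroup generated by the instructions induced
by the coordinate functions of `f`. -/
theorem no_singular_semigroup (q n : ℕ) (hq : 2 ≤ q) (hn : 2 ≤ n)
    (A : Type*) [Fintype A] (hA : Fintype.card A = q) :
    ¬ ∃ f : (Fin n → A) → Fin n → A,
        ∀ g : (Fin n → A) → Fin n → A, ¬ Function.Bijective g →
          ∃ l : List (Fin n), l ≠ [] ∧ ∀ x, g x = applyInstrs f l x := by
  classical
  rintro ⟨f, Asm⟩
  have hcard : 1 < Fintype.card A := by omega
  have hA2 : Nonempty A := Fintype.card_pos_iff.mp (by omega)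
  obtain ⟨a₀⟩ := hA2
  -- basic facts about merge maps
  have merge_ne_bij : ∀ a b : Fin n → A, a ≠ b →
      ¬ Function.Bijective (fun x => if x = b then a else x) := by
    intro a b hab ⟨hinj, _⟩
    apply hab
    apply hinj
    show (if a = b then a else a) = (if b = b then a else b)
    simp
  -- the key consequence of the assumption, via collision_lemma
  have key : ∀ a b : Fin n → A, a ≠ b →
      ∃ (i : Fin n) (u v : Fin n → A), u i ≠ v i ∧ (∀ j, j ≠ i → u j = v j) ∧
        f u i = f v i ∧
        ∀ j, Function.Injective (instr f j) ∨
          ((u j = a j ∧ v j = b j) ∨ (u j = b j ∧ v j = a j)) := by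
    intro a b hab
    obtain ⟨l, hl, hw⟩ := Asm (fun x => if x = b then a else x) (merge_ne_bij a b hab)
    have hga : (if a = b then a else a) = a := by simp
    have hgb : (if b = b then a else b) = a := by simp
    refine collision_lemma f l hl a b hab ?_ ?_
    · rw [← hw a, ← hw b]
      show (if a = b then a else a) = (if b = b then a else b)
      rw [hga, hgb]

    · intro x y hxy
      have hxy' : (if x = b then a else x) = (if y = b then a else y) := by
        rw [hw x, hw y]; exact hxy
      by_cases hx : x = b <;> by_cases hy : y = b
      · exact Or.inl (hx.trans hy.symm)
      · rw [if_pos hx, if_neg hy] at hxy'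
        exact Or.inr (Or.inr ⟨hx, hxy'.symm⟩)
      · rw [if_neg hx, if_pos hy] at hxy'
        exact Or.inr (Or.inl ⟨hxy', hy⟩)
      · rw [if_neg hx, if_neg hy] at hxy'
        exact Or.inl hxy'
  by_cases hex : ∃ j₀, Function.Injective (instr f j₀)
  · -- Case A: some instruction is injective
    obtain ⟨j₀, hj₀⟩ := hex
    obtain ⟨β, hβ⟩ := Fintype.exists_ne_of_one_lt_card hcard a₀
    set a : Fin n → A := fun _ => a₀ with ha_def
    set b : Fin n → A := Function.update a j₀ β with hb_def
    have hab : a ≠ b := by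
      intro h
      have := congrFun h j₀
      rw [hb_def] at this
      simp only [Function.update_self] at this
      exact hβ (this.symm)
    obtain ⟨i, u, v, h1, h2, h3, h4⟩ := key a b hab
    have hnoninj : ¬ Function.Injective (instr f i) := by
      intro hinj
      have heq : instr f i u = instr f i v := by
        funext j
        rcases eq_or_ne j i with rfl | hj
        · simpa [instr] using h3
        · simpa [instr, Function.update_of_ne hj] using h2 j hj
      exact h1 (congrFun (hinj heq) i)
    have hij : i ≠ j₀ := fun h => hnoninj (h ▸ hj₀)
    have hconst : a i = b i := by
      rw [hb_def]
      exact (Function.update_of_ne hij β a).symm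
    rcases h4 i with h | ⟨e1, e2⟩ | ⟨e1, e2⟩
    · exact hnoninj h
    · exact h1 (e1.trans (hconst.trans e2.symm))
    · exact h1 (e1.trans (hconst.symm.trans e2.symm))
  · push_neg at hex
    by_cases hH : ∀ (c : Fin n) (x y : Fin n → A), (∀ j, j ≠ c → x j = y j) → f x c = f y c
    · -- Case B2: every coordinate function ignores its own register
      obtain ⟨β, hβ⟩ := Fintype.exists_ne_of_one_lt_card hcard a₀
      set b : Fin n → A := fun _ => a₀ with hb_def
      set a : Fin n → A := fun _ => β with ha_def
      have hab : a ≠ b := by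
        intro h
        exact hβ (congrFun h ⟨0, by omega⟩)
      obtain ⟨l, hl, hw⟩ := Asm (fun x => if x = b then a else x) (merge_ne_bij a b hab)
      set g : (Fin n → A) → Fin n → A := fun x => if x = b then a else x with hg_def
      set c : Fin n := l.getLast hl with hc_def
      have hdecomp : ∀ x, g x = instr f c (applyInstrs f l.dropLast x) := by
        intro x
        have hsplit : l.dropLast ++ [c] = l := List.dropLast_append_getLast hl
        have h2 : applyInstrs f l x = instr f c (applyInstrs f l.dropLast x) := by
          conv_lhs => rw [← hsplit]
          rw [applyInstrs_append]
        rw [hg_def]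
        show (if x = b then a else x) = _
        rw [hw x, h2]
      have hfix : ∀ x, f (g x) c = (g x) c := by
        intro x
        have hgx := hdecomp x
        set y := applyInstrs f l.dropLast x with hy_def
        have h1 : (g x) c = f y c := by rw [hgx]; simp [instr]
        have h2 : f (g x) c = f y c := by
          apply hH c (g x) y
          intro j hj
          rw [hgx]
          simp [instr, Function.update_of_ne hj]
        rw [h2, h1]
      -- construct a point z ≠ b with f z c ≠ z c, fixed by g
      have hn1 : 1 < Fintype.card (Fin n) := by simp; omega
      obtain ⟨j, hj⟩ := Fintype.exists_ne_of_one_lt_card hn1 c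
      obtain ⟨β', hβ'⟩ := Fintype.exists_ne_of_one_lt_card hcard (b j)
      set b' : Fin n → A := Function.update b j β' with hb'_def
      obtain ⟨ε, hε⟩ := Fintype.exists_ne_of_one_lt_card hcard (f b' c)
      set z : Fin n → A := Function.update b' c ε with hz_def
      have hzb : z ≠ b := by
        intro h
        apply hβ'
        have := congrFun h j
        rw [hz_def, hb'_def] at this
        rw [Function.update_of_ne hj, Function.update_self] at this
        exact this
      have hzc : f z c = f b' c := by
        apply hH c z b'
        intro j' hj'
        rw [hz_def, Function.update_of_ne hj']
      have hgz : g z = z := by rw [hg_def]; exact if_neg hzb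
      have hfz := hfix z
      rw [hgz] at hfz
      have hzcc : z c = ε := by rw [hz_def, Function.update_self]
      exact hε (((hzc.symm.trans hfz).trans hzcc).symm)
    · -- Case B1: some coordinate function depends on its own register
      push_neg at hH
      obtain ⟨c, x, y, hxy, hfne⟩ := hH
      have hab : x ≠ y := fun h => hfne (h ▸ rfl)
      obtain ⟨i, u, v, h1, h2, h3, h4⟩ := key x y hab
      have huv : ∀ j, (u j = x j ∧ v j = y j) ∨ (u j = y j ∧ v j = x j) :=
        fun j => (h4 j).resolve_left (hex j)
      have hic : i = c := by
        by_contra hic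
        have hxyi : x i = y i := hxy i hic
        rcases huv i with ⟨e1, e2⟩ | ⟨e1, e2⟩
        · exact h1 (e1.trans (hxyi.trans e2.symm))
        · exact h1 (e1.trans (hxyi.symm.trans e2.symm))
      subst hic
      rcases huv i with ⟨e1, e2⟩ | ⟨e1, e2⟩
      · have hu : u = x := by
          funext j
          rcases eq_or_ne j i with rfl | hj
          · exact e1
          · rcases huv j with ⟨f1, _⟩ | ⟨f1, _⟩
            · exact f1
            · exact f1.trans (hxy j hj).symm
        have hv : v = y := by
          funext j
          rcases eq_or_ne j i with rfl | hj
          · exact e2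
          · rcases huv j with ⟨_, f2⟩ | ⟨_, f2⟩
            · exact f2
            · exact f2.trans (hxy j hj)
        exact hfne (hu ▸ hv ▸ h3)
      · have hu : u = y := by
          funext j
          rcases eq_or_ne j i with rfl | hj
          · exact e1
          · rcases huv j with ⟨f1, _⟩ | ⟨f1, _⟩
            · exact f1.trans (hxy j hj)
            · exact f1
        have hv : v = x := by
          funext j
          rcases eq_or_ne j i with rfl | hj
          · exact e2
          · rcases huv j with ⟨_, f2⟩ | ⟨_, f2⟩
            · exact f2.trans (hxy j hj).symm
            · exact f2
        exact hfne (hu ▸ hv ▸ h3).symm
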